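/- arXiv:2211.00532 — 2 statements merged into one kernel-verified Lean document; each statement's English description precedes it below -/
import Mathlib

section
/- Let (Hₙ)ₙ be non-decreasing functions Hₙ : [0,T] → ℝ≥0 converging pointwise on [0,T] to a non-decreasing function H, and let S : [0,T] → ℝ be a bounded càdlàg function. Suppose additionally that the integrals are defined so that jumps of the integrator at a time u are paid at the left limit S(u−). Then ∫₀ᵗ S dHₙ → ∫₀ᵗ S dH for every t ∈ [0,T], where ∫₀ᵗ S dK := ∫₀ᵗ S dK^c + Σ_{0<u≤t} S(u−) ΔK(u) + Σ_{0≤u<t} S(u) Δ₊K(u) for a non-decreasing K with continuous part K^c, left jumps ΔK(u) = K(u) − K(u−) and right jumps Δ₊K(u) = K(u+) − K(u). -/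
open Set Filter Topology MeasureTheory Function

/-- The modified Stieltjes integral `∫₀ᵗ S dK` of `S` against a non-decreasing
integrator `K`, in the convention where left jumps `ΔK(u) = K u - K(u-)` of the
integrator are charged at the left limit `S(u-)` and right jumps
`Δ₊K(u) = K(u+) - K u` are charged at `S u` for `0 ≤ u < t`.  It is realised as the
Lebesgue–Stieltjes integral against the right-continuous regularisation of `K`,
corrected at the left jumps (re-charged at `S(u-)`), with the right jump at `t`
removed and the right jump at `0` added. -/
noncomputable def modInt (S K : ℝ → ℝ) (hK : Monotone K) (t : ℝ) : ℝ :=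
  (∫ u in Set.Ioc (0 : ℝ) t, S u ∂hK.stieltjesFunction.measure)
    - (∑' u : ℝ, Set.indicator (Set.Ioc (0 : ℝ) t)
        (fun u => (S u - Function.leftLim S u) * (K u - Function.leftLim K u)) u)
    - S t * (Function.rightLim K t - K t)
    + S 0 * (Function.rightLim K 0 - K 0)


open Classical in
/-- Sum of left jumps of a monotone function over a finite subset of `(a,b]`. -/
lemma sum_jump_le {K : ℝ → ℝ} (hK : Monotone K) :
    ∀ F : Finset ℝ, ∀ a b : ℝ, a ≤ b → (↑F ⊆ Set.Ioc a b) →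
      ∑ u ∈ F, (K u - leftLim K u) ≤ K b - K a := by
  intro F
  induction F using Finset.strongInduction with
  | _ F ih =>
    intro a b hab hF
    rcases F.eq_empty_or_nonempty with rfl | hne
    · simpa using hK hab
    · set m := F.max' hne with hm
      have hmF : m ∈ F := F.max'_mem hne
      have hmIoc : m ∈ Set.Ioc a b := hF hmF
      have hsum : ∑ u ∈ F, (K u - leftLim K u)
          = ∑ u ∈ F.erase m, (K u - leftLim K u) + (K m - leftLim K m) := by
        rw [Finset.sum_erase_add _ _ hmF]
      have herase : ∑ u ∈ F.erase m, (K u - leftLim K u) ≤ leftLim K m - K a := by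
        rcases (F.erase m).eq_empty_or_nonempty with he | hne'
        · rw [he]
          simp only [Finset.sum_empty, sub_nonneg]
          exact hK.le_leftLim hmIoc.1
        · set v := (F.erase m).max' hne' with hv
          have hvF : v ∈ F.erase m := (F.erase m).max'_mem hne'
          have hvm : v < m := lt_of_le_of_ne (F.le_max' v (Finset.mem_of_mem_erase hvF))
            (Finset.ne_of_mem_erase hvF)
          have hsub : ↑(F.erase m) ⊆ Set.Ioc a v := by
            intro u hu
            exact ⟨(hF (Finset.mem_of_mem_erase hu)).1, (F.erase m).le_max' u hu⟩
          have := ih (F.erase m) (Finset.erase_ssubset hmF) a v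
            (le_trans (hF (Finset.mem_of_mem_erase hvF)).1.le le_rfl) hsub
          calc ∑ u ∈ F.erase m, (K u - leftLim K u) ≤ K v - K a := this
            _ ≤ leftLim K m - K a := by
                have := hK.le_leftLim hvm
                linarith
      have : K m ≤ K b := hK hmIoc.2
      linarith [hsum, herase]

open Classical in
lemma jump_tsum_bound {K : ℝ → ℝ} (hK : Monotone K) {a b C : ℝ} (hab : a ≤ b) (hC : 0 ≤ C)
    {s : Set ℝ} (hs : s ⊆ Set.Ioc a b) {g : ℝ → ℝ} (hg : ∀ u ∈ s, |g u| ≤ C) :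
    Summable (s.indicator (fun u => g u * (K u - leftLim K u))) ∧
    |∑' u, s.indicator (fun u => g u * (K u - leftLim K u)) u| ≤ C * (K b - K a) := by
  set h : ℝ → ℝ := s.indicator (fun u => K u - leftLim K u) with hh
  have hjump : ∀ u, 0 ≤ K u - leftLim K u := fun u => sub_nonneg.2 (hK.leftLim_le le_rfl)
  have hpos : ∀ u, 0 ≤ h u := fun u => Set.indicator_nonneg (fun u _ => hjump u) u
  have hsumle : ∀ F : Finset ℝ, ∑ u ∈ F, h u ≤ K b - K a := by
    intro F
    have : ∑ u ∈ F, h u = ∑ u ∈ F.filter (fun u => u ∈ s), (K u - leftLim K u) := by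
      rw [Finset.sum_filter]
      exact Finset.sum_congr rfl (fun u _ => by simp [hh, Set.indicator_apply])
    rw [this]
    refine sum_jump_le hK _ a b hab ?_
    intro u hu
    simp only [Finset.coe_filter, Set.mem_setOf_eq] at hu
    exact hs hu.2
  have hsummh : Summable h := summable_of_sum_le hpos hsumle
  have htsumh : ∑' u, h u ≤ K b - K a := Summable.tsum_le_of_sum_le hsummh hsumle
  set f : ℝ → ℝ := s.indicator (fun u => g u * (K u - leftLim K u)) with hf
  have habs : ∀ u, |f u| ≤ C * h u := by
    intro u
    by_cases hu : u ∈ s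
    · simp only [hf, hh, Set.indicator_of_mem hu]
      rw [abs_mul, abs_of_nonneg (hjump u)]
      exact mul_le_mul_of_nonneg_right (hg u hu) (hjump u)
    · simp [hf, hh, Set.indicator_of_notMem hu, hC]
  have hsummabs : Summable (fun u => |f u|) :=
    Summable.of_nonneg_of_le (fun u => abs_nonneg _) habs (hsummh.mul_left C)
  have hsummf : Summable f := hsummabs.of_abs
  refine ⟨hsummf, ?_⟩
  have hfn : Summable (fun u => ‖f u‖) := by simpa only [Real.norm_eq_abs] using hsummabs
  have hnorm : ‖∑' u, f u‖ ≤ ∑' u, ‖f u‖ := norm_tsum_le_tsum_norm hfn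
  simp only [Real.norm_eq_abs] at hnorm
  calc |∑' u, f u| ≤ ∑' u, |f u| := hnorm
    _ ≤ ∑' u, C * h u := Summable.tsum_le_tsum habs hsummabs (hsummh.mul_left C)
    _ = C * ∑' u, h u := by rw [tsum_mul_left]
    _ ≤ C * (K b - K a) := mul_le_mul_of_nonneg_left htsumh hC

lemma leftLim_rightLim' {K : ℝ → ℝ} (hK : Monotone K) (x : ℝ) :
    leftLim (rightLim K) x = leftLim K x := by
  apply le_antisymm
  · refine le_of_tendsto (hK.rightLim.tendsto_leftLim x) ?_
    filter_upwards [self_mem_nhdsWithin] with v (hv : v < x)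
    obtain ⟨w, hvw, hwx⟩ := exists_between hv
    exact (hK.rightLim_le hvw).trans (hK.le_leftLim hwx)
  · refine le_of_tendsto (hK.tendsto_leftLim x) ?_
    filter_upwards [self_mem_nhdsWithin] with v (hv : v < x)
    exact (hK.le_rightLim le_rfl).trans (hK.rightLim.le_leftLim hv)

lemma stieltjes_coe {K : ℝ → ℝ} (hK : Monotone K) :
    ⇑hK.stieltjesFunction = rightLim K := funext hK.stieltjesFunction_eq

lemma measure_Ioc_toReal {K : ℝ → ℝ} (hK : Monotone K) {a b : ℝ} (hab : a ≤ b) :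
    (hK.stieltjesFunction.measure (Set.Ioc a b)).toReal = rightLim K b - rightLim K a := by
  rw [StieltjesFunction.measure_Ioc, hK.stieltjesFunction_eq, hK.stieltjesFunction_eq]
  exact ENNReal.toReal_ofReal (sub_nonneg.2 (hK.rightLim hab))

lemma measure_Ioo_toReal {K : ℝ → ℝ} (hK : Monotone K) {a b : ℝ} (hab : a < b) :
    (hK.stieltjesFunction.measure (Set.Ioo a b)).toReal = leftLim K b - rightLim K a := by
  rw [StieltjesFunction.measure_Ioo, stieltjes_coe hK, leftLim_rightLim' hK]
  exact ENNReal.toReal_ofReal (sub_nonneg.2 (hK.rightLim_le_leftLim hab))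

lemma measure_singleton_toReal {K : ℝ → ℝ} (hK : Monotone K) (b : ℝ) :
    (hK.stieltjesFunction.measure {b}).toReal = rightLim K b - leftLim K b := by
  rw [StieltjesFunction.measure_singleton, stieltjes_coe hK, leftLim_rightLim' hK]
  exact ENNReal.toReal_ofReal (sub_nonneg.2 (hK.leftLim_le_rightLim le_rfl))

lemma measure_Ioc_ne_top {K : ℝ → ℝ} (hK : Monotone K) (a b : ℝ) :
    hK.stieltjesFunction.measure (Set.Ioc a b) ≠ ⊤ := by
  rw [StieltjesFunction.measure_Ioc]; exact ENNReal.ofReal_ne_top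

lemma measure_ne_top_of_subset {K : ℝ → ℝ} (hK : Monotone K) {s : Set ℝ} {a b : ℝ}
    (hs : s ⊆ Set.Ioc a b) : hK.stieltjesFunction.measure s ≠ ⊤ :=
  ne_top_of_le_ne_top (measure_Ioc_ne_top hK a b) (measure_mono hs)

lemma integrableOn_bdd {S : ℝ → ℝ} {M : ℝ} (hbdd : ∀ u, |S u| ≤ M) (hSmeas : Measurable S)
    {K : ℝ → ℝ} (hK : Monotone K) {s : Set ℝ} {a b : ℝ} (hs : s ⊆ Set.Ioc a b) :
    IntegrableOn S s hK.stieltjesFunction.measure := by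
  refine Measure.integrableOn_of_bounded (M := M) (measure_ne_top_of_subset hK hs)
    hSmeas.aestronglyMeasurable ?_
  filter_upwards with u
  simpa [Real.norm_eq_abs] using hbdd u

lemma leftLim_abs_le {S : ℝ → ℝ} {M : ℝ} (hbdd : ∀ u, |S u| ≤ M)
    (hSll : ∀ x, ∃ l, Tendsto S (𝓝[<] x) (𝓝 l)) (u : ℝ) : |leftLim S u| ≤ M := by
  obtain ⟨l, hl⟩ := hSll u
  rw [leftLim_eq_of_tendsto hl]
  exact le_of_tendsto hl.abs (Eventually.of_forall fun v => hbdd v)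

lemma leftLim_close {S : ℝ → ℝ} (hSll : ∀ x, ∃ l, Tendsto S (𝓝[<] x) (𝓝 l))
    {a b c ε : ℝ} (hab : a < b) (hclose : ∀ u ∈ Set.Ico a b, |S u - c| ≤ ε)
    {x : ℝ} (hax : a < x) (hxb : x ≤ b) : |leftLim S x - c| ≤ ε := by
  obtain ⟨l, hl⟩ := hSll x
  rw [leftLim_eq_of_tendsto hl]
  refine le_of_tendsto ((hl.sub_const c).abs) ?_
  filter_upwards [Ioo_mem_nhdsLT_of_mem (show x ∈ Set.Ioc a x from ⟨hax, le_rfl⟩)] with v hv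
  exact hclose v ⟨hv.1.le, lt_of_lt_of_le hv.2 hxb⟩

lemma modInt_piece {S : ℝ → ℝ} {M : ℝ} (hbdd : ∀ u, |S u| ≤ M) (hSmeas : Measurable S)
    (hSll : ∀ x, ∃ l, Tendsto S (𝓝[<] x) (𝓝 l))
    {K : ℝ → ℝ} (hK : Monotone K) {a b c ε : ℝ}
    (h0a : 0 ≤ a) (hab : a ≤ b) (hε : 0 ≤ ε)
    (hclose : ∀ u ∈ Set.Ico a b, |S u - c| ≤ ε) :
    |modInt S K hK b - modInt S K hK a - c * (K b - K a)| ≤ 3 * ε * (K b - K a) := by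
  rcases eq_or_lt_of_le hab with rfl | hab'
  · simp [hε]
  have h0b : (0 : ℝ) ≤ b := h0a.trans hab
  set μ := hK.stieltjesFunction.measure with hμ
  set f : ℝ → ℝ := fun u => (S u - leftLim S u) * (K u - leftLim K u) with hf
  have hM0 : 0 ≤ M := (abs_nonneg _).trans (hbdd 0)
  have hg2M : ∀ u ∈ Set.Ioc (0:ℝ) b, |S u - leftLim S u| ≤ 2 * M := fun u _ =>
    (abs_sub _ _).trans (by linarith [hbdd u, leftLim_abs_le hbdd hSll u])
  -- summabilities
  have hsum_b := (jump_tsum_bound hK h0b (by linarith) subset_rfl hg2M).1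
  have hsum_a := (jump_tsum_bound hK h0a (by linarith)
    (subset_rfl (a := Set.Ioc (0:ℝ) a)) (fun u hu => hg2M u ⟨hu.1, hu.2.trans hab⟩)).1
  have hsub_ab : Set.Ioc a b ⊆ Set.Ioc (0:ℝ) b := fun u hu => ⟨h0a.trans_lt hu.1, hu.2⟩
  have hsum_ab := (jump_tsum_bound hK h0b (by linarith) hsub_ab
    (fun u hu => hg2M u (hsub_ab hu))).1
  have hsub_oo : Set.Ioo a b ⊆ Set.Ioc (0:ℝ) b := fun u hu => ⟨h0a.trans_lt hu.1, hu.2.le⟩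
  have hsum_oo := (jump_tsum_bound hK h0b (by linarith) hsub_oo
    (fun u hu => hg2M u (hsub_oo hu))).1
  -- integrabilities
  have hint_a : IntegrableOn S (Set.Ioc (0:ℝ) a) μ := integrableOn_bdd hbdd hSmeas hK subset_rfl
  have hint_ab : IntegrableOn S (Set.Ioc a b) μ := integrableOn_bdd hbdd hSmeas hK subset_rfl
  have hint_oo : IntegrableOn S (Set.Ioo a b) μ :=
    integrableOn_bdd hbdd hSmeas hK Set.Ioo_subset_Ioc_self
  have hint_sing : IntegrableOn S {b} μ :=
    integrableOn_bdd hbdd hSmeas hK (Set.singleton_subset_iff.2 ⟨hab', le_rfl⟩)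
  -- splitting of the integral and the tsum at `a`
  have hIoc : Set.Ioc (0:ℝ) a ∪ Set.Ioc a b = Set.Ioc (0:ℝ) b := Set.Ioc_union_Ioc_eq_Ioc h0a hab
  have hint : (∫ u in Set.Ioc (0:ℝ) b, S u ∂μ)
      = (∫ u in Set.Ioc (0:ℝ) a, S u ∂μ) + ∫ u in Set.Ioc a b, S u ∂μ := by
    rw [← hIoc, setIntegral_union (Set.Ioc_disjoint_Ioc_of_le le_rfl) measurableSet_Ioc hint_a hint_ab]
  have htsum : (∑' u, (Set.Ioc (0:ℝ) b).indicator f u)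
      = (∑' u, (Set.Ioc (0:ℝ) a).indicator f u) + ∑' u, (Set.Ioc a b).indicator f u := by
    rw [← hIoc, Set.indicator_union_of_disjoint (Set.Ioc_disjoint_Ioc_of_le le_rfl)]
    exact Summable.tsum_add hsum_a hsum_ab
  have key : modInt S K hK b - modInt S K hK a
      = (∫ u in Set.Ioc a b, S u ∂μ) - (∑' u, (Set.Ioc a b).indicator f u)
        - S b * (rightLim K b - K b) + S a * (rightLim K a - K a) := by
    simp only [modInt, ← hμ, ← hf]
    rw [hint, htsum]; ring
  -- split off the atom at `b`
  have hIoo : Set.Ioo a b ∪ {b} = Set.Ioc a b := by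
    rw [← Set.Ioo_union_Icc_eq_Ioc hab' le_rfl, Set.Icc_self]
  have hdisj : Disjoint (Set.Ioo a b) ({b} : Set ℝ) :=
    Set.disjoint_singleton_right.2 (fun h => (lt_irrefl b h.2).elim)
  have hsing : (∫ u in ({b} : Set ℝ), S u ∂μ) = S b * (μ {b}).toReal := by
    rw [Measure.restrict_singleton, integral_smul_measure, integral_dirac]
    simp [mul_comm]
  have hint2 : (∫ u in Set.Ioc a b, S u ∂μ)
      = (∫ u in Set.Ioo a b, S u ∂μ) + S b * (μ {b}).toReal := by
    rw [← hIoo, setIntegral_union hdisj (measurableSet_singleton b) hint_oo hint_sing, hsing]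
  have htsing : (∑' u, ({b} : Set ℝ).indicator f u) = f b := by
    rw [tsum_eq_single b (fun u hu => Set.indicator_of_notMem (by simpa using hu) f)]
    simp
  have hsum_sing : Summable (({b} : Set ℝ).indicator f) := by
    refine summable_of_ne_finset_zero (s := {b}) (fun u hu => ?_)
    exact Set.indicator_of_notMem (by simpa using hu) f
  have htsum2 : (∑' u, (Set.Ioc a b).indicator f u)
      = (∑' u, (Set.Ioo a b).indicator f u) + f b := by
    rw [← hIoo, Set.indicator_union_of_disjoint hdisj, Summable.tsum_add hsum_oo hsum_sing, htsing]
  -- measure values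
  have mIoo : (μ (Set.Ioo a b)).toReal = leftLim K b - rightLim K a := measure_Ioo_toReal hK hab'
  have msing : (μ {b}).toReal = rightLim K b - leftLim K b := measure_singleton_toReal hK b
  -- integral estimate on `Ioo a b`
  have hμoo_lt : μ (Set.Ioo a b) < ⊤ :=
    lt_top_iff_ne_top.2 (measure_ne_top_of_subset hK Set.Ioo_subset_Ioc_self)
  have hconst : IntegrableOn (fun _ => c) (Set.Ioo a b) μ :=
    integrableOn_const hμoo_lt.ne
  have h1 : |(∫ u in Set.Ioo a b, S u ∂μ) - c * (μ (Set.Ioo a b)).toReal|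
      ≤ ε * (μ (Set.Ioo a b)).toReal := by
    have e : (∫ u in Set.Ioo a b, S u ∂μ) - c * (μ (Set.Ioo a b)).toReal
        = ∫ u in Set.Ioo a b, (S u - c) ∂μ := by
      rw [integral_sub hint_oo hconst, setIntegral_const, smul_eq_mul, measureReal_def]
      ring
    rw [e]
    have := norm_setIntegral_le_of_norm_le_const (μ := μ) (s := Set.Ioo a b) (f := fun u => S u - c) (C := ε) hμoo_lt
      (fun x hx => by simpa [Real.norm_eq_abs] using hclose x ⟨hx.1.le, hx.2⟩)
    simpa [Real.norm_eq_abs, measureReal_def] using this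
  -- tsum estimate on `Ioo a b`
  have hg2ε : ∀ u ∈ Set.Ioo a b, |S u - leftLim S u| ≤ 2 * ε := by
    intro u hu
    have h1' := hclose u ⟨hu.1.le, hu.2⟩
    have h2' := leftLim_close hSll hab' hclose hu.1 hu.2.le
    calc |S u - leftLim S u| = |(S u - c) - (leftLim S u - c)| := by ring_nf
      _ ≤ |S u - c| + |leftLim S u - c| := abs_sub _ _
      _ ≤ 2 * ε := by linarith
  have h2 : |∑' u, (Set.Ioo a b).indicator f u| ≤ 2 * ε * (K b - K a) := by
    have := (jump_tsum_bound hK (le_of_lt hab') (by linarith) Set.Ioo_subset_Ioc_self hg2ε).2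
    simpa [← hf] using this
  -- boundary estimates
  have h3 : |leftLim S b - c| ≤ ε := leftLim_close hSll hab' hclose hab' le_rfl
  have h4 : |S a - c| ≤ ε := hclose a ⟨le_rfl, hab'⟩
  -- nonnegativity of the various increments
  have n1 : 0 ≤ K b - leftLim K b := sub_nonneg.2 (hK.leftLim_le le_rfl)
  have n2 : 0 ≤ rightLim K a - K a := sub_nonneg.2 (hK.le_rightLim le_rfl)
  have n3 : 0 ≤ leftLim K b - rightLim K a := sub_nonneg.2 (hK.rightLim_le_leftLim hab')
  -- the exact algebraic identity
  have keyeq : modInt S K hK b - modInt S K hK a - c * (K b - K a)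
      = ((∫ u in Set.Ioo a b, S u ∂μ) - c * (μ (Set.Ioo a b)).toReal)
        - (∑' u, (Set.Ioo a b).indicator f u)
        + (leftLim S b - c) * (K b - leftLim K b)
        + (S a - c) * (rightLim K a - K a) := by
    rw [key, hint2, htsum2, msing, mIoo]
    have hfb : f b = (S b - leftLim S b) * (K b - leftLim K b) := rfl
    rw [hfb]; ring
  rw [keyeq]
  have tri : |((∫ u in Set.Ioo a b, S u ∂μ) - c * (μ (Set.Ioo a b)).toReal)
        - (∑' u, (Set.Ioo a b).indicator f u)
        + (leftLim S b - c) * (K b - leftLim K b)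
        + (S a - c) * (rightLim K a - K a)|
      ≤ |(∫ u in Set.Ioo a b, S u ∂μ) - c * (μ (Set.Ioo a b)).toReal|
        + |∑' u, (Set.Ioo a b).indicator f u|
        + |(leftLim S b - c) * (K b - leftLim K b)|
        + |(S a - c) * (rightLim K a - K a)| := by
    calc _ ≤ |((∫ u in Set.Ioo a b, S u ∂μ) - c * (μ (Set.Ioo a b)).toReal)
        - (∑' u, (Set.Ioo a b).indicator f u)
        + (leftLim S b - c) * (K b - leftLim K b)|
        + |(S a - c) * (rightLim K a - K a)| := abs_add_le _ _
      _ ≤ |((∫ u in Set.Ioo a b, S u ∂μ) - c * (μ (Set.Ioo a b)).toReal)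
        - (∑' u, (Set.Ioo a b).indicator f u)|
        + |(leftLim S b - c) * (K b - leftLim K b)|
        + |(S a - c) * (rightLim K a - K a)| := by
          gcongr
          exact abs_add_le _ _
      _ ≤ _ := by
          gcongr
          exact abs_sub _ _
  have h3' : |(leftLim S b - c) * (K b - leftLim K b)| ≤ ε * (K b - leftLim K b) := by
    rw [abs_mul, abs_of_nonneg n1]
    exact mul_le_mul_of_nonneg_right h3 n1
  have h4' : |(S a - c) * (rightLim K a - K a)| ≤ ε * (rightLim K a - K a) := by
    rw [abs_mul, abs_of_nonneg n2]
    exact mul_le_mul_of_nonneg_right h4 n2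
  rw [mIoo] at h1
  calc _ ≤ _ := tri
    _ ≤ ε * (leftLim K b - rightLim K a) + 2 * ε * (K b - K a)
        + ε * (K b - leftLim K b) + ε * (rightLim K a - K a) := by
        rw [mIoo]
        linarith [h1, h2, h3', h4']
    _ = 3 * ε * (K b - K a) := by ring

lemma modInt_zero (S K : ℝ → ℝ) (hK : Monotone K) : modInt S K hK 0 = 0 := by
  simp [modInt]

lemma exists_partition (S : ℝ → ℝ)
    (hSrc : ∀ x, Tendsto S (𝓝[>] x) (𝓝 (S x)))
    (hSll : ∀ x, ∃ l, Tendsto S (𝓝[<] x) (𝓝 l))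
    {t ε : ℝ} (ht : 0 < t) (hε : 0 < ε) :
    ∃ (k : ℕ) (p : ℕ → ℝ), p 0 = 0 ∧ p k = t ∧ (∀ i, p i ≤ p (i + 1)) ∧ (∀ i, 0 ≤ p i) ∧
      (∀ i < k, ∀ u ∈ Set.Ico (p i) (p (i + 1)), |S u - S (p i)| ≤ ε) := by
  set A : Set ℝ := {x | 0 ≤ x ∧ x ≤ t ∧ ∃ k : ℕ, ∃ p : ℕ → ℝ, p 0 = 0 ∧ p k = x ∧
    (∀ i, p i ≤ p (i + 1)) ∧ (∀ i, 0 ≤ p i) ∧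
    (∀ i < k, ∀ u ∈ Set.Ico (p i) (p (i + 1)), |S u - S (p i)| ≤ ε)} with hA
  have h0A : (0 : ℝ) ∈ A :=
    ⟨le_rfl, ht.le, 0, fun _ => 0, rfl, rfl, fun _ => le_rfl, fun _ => le_rfl,
      fun i hi => absurd hi (Nat.not_lt_zero i)⟩
  have happend : ∀ x ∈ A, ∀ y : ℝ, x ≤ y → y ≤ t →
      (∀ u ∈ Set.Ico x y, |S u - S x| ≤ ε) → y ∈ A := by
    intro x hx y hxy hyt hosc
    obtain ⟨hx0, hxt, k, p, hp0, hpk, hmono, hpos, hoscp⟩ := hx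
    refine ⟨hx0.trans hxy, hyt, k + 1, fun i => if i ≤ k then p i else y, ?_, ?_, ?_, ?_, ?_⟩
    · simp [Nat.zero_le, hp0]
    · simp
    · intro i
      by_cases h1 : i + 1 ≤ k
      · simp only [if_pos h1, if_pos (Nat.le_of_succ_le h1)]
        exact hmono i
      · by_cases h2 : i ≤ k
        · have hik : i = k := le_antisymm h2 (by omega)
          simp only [if_pos h2, if_neg h1, hik, hpk]
          simpa [hik, hpk] using hxy
        · simp [h2, h1]
    · intro i
      by_cases h2 : i ≤ k
      · simpa [h2] using hpos i
      · simpa [h2] using hx0.trans hxy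
    · intro i hik u hu
      by_cases h1 : i < k
      · have h2 : i ≤ k := h1.le
        have h3 : i + 1 ≤ k := h1
        simp only [if_pos h2, if_pos h3] at hu ⊢
        exact hoscp i h1 u hu
      · have h2 : i ≤ k := by omega
        have h1' : ¬ (i + 1 ≤ k) := by omega
        have hik' : i = k := by omega
        simp only [if_pos h2, if_neg h1'] at hu ⊢
        rw [hik', hpk] at hu ⊢
        exact hosc u hu
  have hAne : A.Nonempty := ⟨0, h0A⟩
  have hAbdd : BddAbove A := ⟨t, fun x hx => hx.2.1⟩
  set s := sSup A with hs
  have hs0 : 0 ≤ s := le_csSup hAbdd h0A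
  have hst : s ≤ t := csSup_le hAne (fun x hx => hx.2.1)
  have hsA : s ∈ A := by
    rcases eq_or_lt_of_le hs0 with hs0' | hs0'
    · rw [← hs0']; exact h0A
    · obtain ⟨l, hl⟩ := hSll s
      have hmem : {u | |S u - l| ≤ ε / 2} ∈ 𝓝[<] s := by
        have : Tendsto (fun u => |S u - l|) (𝓝[<] s) (𝓝 |l - l|) := (hl.sub_const l).abs
        simp only [sub_self, abs_zero] at this
        exact this (ge_mem_nhds (by linarith))
      obtain ⟨a', ha', hsub⟩ := mem_nhdsLT_iff_exists_Ioo_subset.1 hmem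
      have ha'' : max a' 0 < s := max_lt ha' hs0'
      obtain ⟨x, hxA, hx⟩ := exists_lt_of_lt_csSup hAne ha''
      have hxs : x ≤ s := le_csSup hAbdd hxA
      rcases eq_or_lt_of_le hxs with rfl | hxs'
      · exact hxA
      · refine happend x hxA s hxs hst ?_
        intro u hu
        rcases eq_or_lt_of_le hu.1 with rfl | hu1
        · simpa using hε.le
        · have hxI : x ∈ Set.Ioo a' s := ⟨(le_max_left a' 0).trans_lt hx, hxs'⟩
          have huI : u ∈ Set.Ioo a' s := ⟨hxI.1.trans hu1, hu.2⟩
          have e1 := hsub hxI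
          have e2 := hsub huI
          simp only [Set.mem_setOf_eq] at e1 e2
          calc |S u - S x| = |(S u - l) - (S x - l)| := by ring_nf
            _ ≤ |S u - l| + |S x - l| := abs_sub _ _
            _ ≤ ε := by linarith
  have hseq : s = t := by
    by_contra hne
    have hst' : s < t := lt_of_le_of_ne hst hne
    have hmem : {u | |S u - S s| ≤ ε} ∈ 𝓝[>] s := by
      have : Tendsto (fun u => |S u - S s|) (𝓝[>] s) (𝓝 |S s - S s|) := ((hSrc s).sub_const _).abs
      simp only [sub_self, abs_zero] at this
      exact this (ge_mem_nhds hε)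
    obtain ⟨b', hb', hsub⟩ := mem_nhdsGT_iff_exists_Ioo_subset.1 hmem
    have hb'' : s < b' := hb'
    set y := min ((s + b') / 2) t with hy
    have hsy : s < y := lt_min (by linarith) hst'
    have hyt : y ≤ t := min_le_right _ _
    have hyA : y ∈ A := by
      refine happend s hsA y hsy.le hyt ?_
      intro u hu
      rcases eq_or_lt_of_le hu.1 with rfl | hu1
      · simpa using hε.le
      · have : u ∈ Set.Ioo s b' := ⟨hu1, lt_of_lt_of_le hu.2 (by
          calc y ≤ (s + b') / 2 := min_le_left _ _
            _ ≤ b' := by linarith)⟩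
        exact hsub this
    have := le_csSup hAbdd hyA
    exact absurd this (not_le.2 hsy)
  obtain ⟨-, -, k, p, h1, h2, h3, h4, h5⟩ := hsA
  exact ⟨k, p, h1, by rw [h2, hseq], h3, h4, h5⟩

/-- If non-decreasing nonnegative integrators `Hₙ` converge pointwise to the
non-decreasing `H`, and `S` is a bounded càdlàg integrand, then the modified
Stieltjes integrals `∫₀ᵗ S dHₙ` converge to `∫₀ᵗ S dH` for every `t ∈ [0,T]`. -/
theorem stmt_5 (T : ℝ) (hT : 0 < T)
    (Hn : ℕ → ℝ → ℝ) (H : ℝ → ℝ)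
    (hHn : ∀ n, Monotone (Hn n)) (hH : Monotone H)
    (hHnpos : ∀ n t, 0 ≤ Hn n t) (hHpos : ∀ t, 0 ≤ H t)
    (hconv : ∀ t, Tendsto (fun n => Hn n t) atTop (nhds (H t)))
    (S : ℝ → ℝ) (M : ℝ) (hbdd : ∀ u, |S u| ≤ M)
    (hSmeas : Measurable S)
    (hSrc : ∀ t, Tendsto S (nhdsWithin t (Set.Ioi t)) (nhds (S t)))
    (hSll : ∀ t, ∃ l, Tendsto S (nhdsWithin t (Set.Iio t)) (nhds l)) :
    ∀ t ∈ Set.Icc (0 : ℝ) T,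
      Tendsto (fun n => modInt S (Hn n) (hHn n) t) atTop (nhds (modInt S H hH t)) := by
  intro t ht
  rcases eq_or_lt_of_le ht.1 with rfl | ht0
  · simp only [modInt_zero]
    exact tendsto_const_nhds
  rw [Metric.tendsto_atTop]
  intro ε' hε'
  obtain ⟨D, hD⟩ : ∃ D : ℝ, D = H t - H 0 + 1 := ⟨_, rfl⟩
  have hD0 : 0 < D := by
    have : H 0 ≤ H t := hH ht.1
    rw [hD]; linarith
  obtain ⟨ε, hεdef⟩ : ∃ ε : ℝ, ε = ε' / (8 * D) := ⟨_, rfl⟩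
  have hεpos : 0 < ε := by rw [hεdef]; exact div_pos hε' (by linarith)
  obtain ⟨k, p, hp0, hpk, hmono, hppos, hosc⟩ := exists_partition S hSrc hSll ht0 hεpos
  -- the approximation claim, for an arbitrary monotone integrator
  have claimA : ∀ (K : ℝ → ℝ) (hK : Monotone K),
      |modInt S K hK t - ∑ i ∈ Finset.range k, S (p i) * (K (p (i + 1)) - K (p i))|
        ≤ 3 * ε * (K t - K 0) := by
    intro K hK
    have htel : ∑ i ∈ Finset.range k,
        ((modInt S K hK (p (i + 1)) - modInt S K hK (p i))
          - S (p i) * (K (p (i + 1)) - K (p i)))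
        = modInt S K hK t - ∑ i ∈ Finset.range k, S (p i) * (K (p (i + 1)) - K (p i)) := by
      rw [Finset.sum_sub_distrib, Finset.sum_range_sub (fun i => modInt S K hK (p i))]
      rw [hp0, hpk, modInt_zero]
      ring
    rw [← htel]
    calc |∑ i ∈ Finset.range k, ((modInt S K hK (p (i + 1)) - modInt S K hK (p i))
          - S (p i) * (K (p (i + 1)) - K (p i)))|
        ≤ ∑ i ∈ Finset.range k, |(modInt S K hK (p (i + 1)) - modInt S K hK (p i))
          - S (p i) * (K (p (i + 1)) - K (p i))| := Finset.abs_sum_le_sum_abs _ _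
      _ ≤ ∑ i ∈ Finset.range k, 3 * ε * (K (p (i + 1)) - K (p i)) := by
          refine Finset.sum_le_sum (fun i hi => ?_)
          exact modInt_piece hbdd hSmeas hSll hK (hppos i) (hmono i) hεpos.le
            (hosc i (Finset.mem_range.1 hi))
      _ = 3 * ε * (K t - K 0) := by
          rw [← Finset.mul_sum, Finset.sum_range_sub (fun i => K (p i)), hp0, hpk]
  -- convergence of the Riemann-type sums
  have claimB : Tendsto (fun n => ∑ i ∈ Finset.range k, S (p i) * (Hn n (p (i + 1)) - Hn n (p i)))
      atTop (𝓝 (∑ i ∈ Finset.range k, S (p i) * (H (p (i + 1)) - H (p i)))) := by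
    refine tendsto_finset_sum _ (fun i _ => ?_)
    exact ((hconv (p (i + 1))).sub (hconv (p i))).const_mul _
  obtain ⟨N₁, hN₁⟩ := Metric.tendsto_atTop.1 claimB (ε' / 8) (by linarith)
  have hconvD : Tendsto (fun n => Hn n t - Hn n 0) atTop (𝓝 (H t - H 0)) :=
    (hconv t).sub (hconv 0)
  obtain ⟨N₂, hN₂⟩ := Metric.tendsto_atTop.1 hconvD 1 one_pos
  refine ⟨max N₁ N₂, fun n hn => ?_⟩
  have hn₁ : n ≥ N₁ := le_trans (le_max_left _ _) hn
  have hn₂ : n ≥ N₂ := le_trans (le_max_right _ _) hn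
  have hDn : Hn n t - Hn n 0 ≤ D := by
    have := hN₂ n hn₂
    rw [Real.dist_eq] at this
    have := abs_lt.1 this
    rw [hD]; linarith [this.1, this.2]
  have hA1 := claimA (Hn n) (hHn n)
  have hA2 := claimA H hH
  have hB := hN₁ n hn₁
  rw [Real.dist_eq] at hB ⊢
  have hKn0 : 0 ≤ Hn n t - Hn n 0 := sub_nonneg.2 ((hHn n) ht.1)
  have hK0 : H t - H 0 ≤ D := by rw [hD]; linarith
  have hKH0 : 0 ≤ H t - H 0 := sub_nonneg.2 (hH ht.1)
  have b1 : |modInt S (Hn n) (hHn n) t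
      - ∑ i ∈ Finset.range k, S (p i) * (Hn n (p (i + 1)) - Hn n (p i))| ≤ 3 * ε * D :=
    le_trans hA1 (by nlinarith)
  have b2 : |modInt S H hH t
      - ∑ i ∈ Finset.range k, S (p i) * (H (p (i + 1)) - H (p i))| ≤ 3 * ε * D :=
    le_trans hA2 (by nlinarith)
  have hεD : 3 * ε * D = 3 * ε' / 8 := by
    rw [hεdef]
    field_simp
  calc |modInt S (Hn n) (hHn n) t - modInt S H hH t|
      ≤ |modInt S (Hn n) (hHn n) t
          - ∑ i ∈ Finset.range k, S (p i) * (Hn n (p (i + 1)) - Hn n (p i))|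
        + |∑ i ∈ Finset.range k, S (p i) * (Hn n (p (i + 1)) - Hn n (p i))
          - ∑ i ∈ Finset.range k, S (p i) * (H (p (i + 1)) - H (p i))|
        + |∑ i ∈ Finset.range k, S (p i) * (H (p (i + 1)) - H (p i)) - modInt S H hH t| := by
        have := abs_sub_le (modInt S (Hn n) (hHn n) t)
          (∑ i ∈ Finset.range k, S (p i) * (Hn n (p (i + 1)) - Hn n (p i))) (modInt S H hH t)
        have := abs_sub_le (∑ i ∈ Finset.range k, S (p i) * (Hn n (p (i + 1)) - Hn n (p i)))
          (∑ i ∈ Finset.range k, S (p i) * (H (p (i + 1)) - H (p i))) (modInt S H hH t)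
        linarith [abs_sub_le (modInt S (Hn n) (hHn n) t)
          (∑ i ∈ Finset.range k, S (p i) * (Hn n (p (i + 1)) - Hn n (p i))) (modInt S H hH t),
          abs_sub_le (∑ i ∈ Finset.range k, S (p i) * (Hn n (p (i + 1)) - Hn n (p i)))
          (∑ i ∈ Finset.range k, S (p i) * (H (p (i + 1)) - H (p i))) (modInt S H hH t)]
    _ < ε' := by
        rw [abs_sub_comm (∑ i ∈ Finset.range k, S (p i) * (H (p (i + 1)) - H (p i)))
          (modInt S H hH t)] at *
        linarith [b1, b2, hB, hεD]
end

section
/- Let (fₙ)ₙ be a sequence of ℝ≥0-valued random variables on a probability space (Ω, 𝓕, P) such that the set of all convex combinations conv(f₁, f₂, …) is bounded in L⁰ (bounded in probability). Then there exists a sequence gₙ ∈ conv(fₙ, f_{n+1}, …) of forward convex combinations converging P-almost surely to a random variable g that is finite almost surely. -/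
open Set Filter Topology MeasureTheory Finset

namespace Stmt9Aux


theorem sum_shift (d m : ℕ) (F : ℕ → ℝ) :
    ∑ j ∈ Finset.range (m + d + 1), (if j < d then 0 else F (j - d))
      = ∑ j ∈ Finset.range (m + 1), F j := by
  rw [show m + d + 1 = d + (m + 1) by ring, Finset.sum_range_add]
  have h1 : ∑ j ∈ Finset.range d, (if j < d then (0:ℝ) else F (j - d)) = 0 :=
    Finset.sum_eq_zero fun j hj => by simp [Finset.mem_range.1 hj]
  rw [h1, zero_add]
  exact Finset.sum_congr rfl fun j _ => by simp

theorem sum_pad (m M : ℕ) (h : m ≤ M) (F : ℕ → ℝ) :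
    ∑ j ∈ Finset.range (M + 1), (if j < m + 1 then F j else 0)
      = ∑ j ∈ Finset.range (m + 1), F j := by
  rw [← Finset.sum_subset (Finset.range_subset_range.2 (by omega : m + 1 ≤ M + 1))
    (fun x _ hx => by simp [Finset.mem_range] at hx ⊢; omega)]
  exact Finset.sum_congr rfl fun j hj => by simp [Finset.mem_range.1 hj]

variable {Ω : Type*} [MeasurableSpace Ω]

/-- forward convex combinations of `f n, f (n+1), …` -/
def conv (f : ℕ → Ω → ℝ) (n : ℕ) : Set (Ω → ℝ) :=
  {g | ∃ m : ℕ, ∃ a : ℕ → ℝ, (∀ j, 0 ≤ a j) ∧ (∑ j ∈ Finset.range (m+1), a j) = 1 ∧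
    g = fun ω => ∑ j ∈ Finset.range (m+1), a j * f (n+j) ω}

omit [MeasurableSpace Ω] in
theorem conv_nonempty (f : ℕ → Ω → ℝ) (n : ℕ) : (conv f n).Nonempty :=
  ⟨_, 0, fun _ => 1, fun _ => zero_le_one, by simp, rfl⟩

theorem conv_measurable {f : ℕ → Ω → ℝ} (hmeas : ∀ n, Measurable (f n)) {n : ℕ}
    {g : Ω → ℝ} (hg : g ∈ conv f n) : Measurable g := by
  obtain ⟨m, a, -, -, rfl⟩ := hg
  exact Finset.measurable_sum _ fun j _ => (hmeas (n+j)).const_mul _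

omit [MeasurableSpace Ω] in
theorem conv_nonneg {f : ℕ → Ω → ℝ} (hpos : ∀ n ω, 0 ≤ f n ω) {n : ℕ}
    {g : Ω → ℝ} (hg : g ∈ conv f n) (ω : Ω) : 0 ≤ g ω := by
  obtain ⟨m, a, ha, -, rfl⟩ := hg
  exact Finset.sum_nonneg fun j _ => mul_nonneg (ha j) (hpos _ ω)

omit [MeasurableSpace Ω] in
theorem conv_shift {f : ℕ → Ω → ℝ} {n d : ℕ} {g : Ω → ℝ} (hg : g ∈ conv f (n + d)) :
    g ∈ conv f n := by
  obtain ⟨m, a, ha, hsum, rfl⟩ := hg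
  refine ⟨m + d, fun j => if j < d then 0 else a (j - d), fun j => ?_, ?_, ?_⟩
  · dsimp only; split <;> [rfl; exact ha _]
  · rw [sum_shift d m a]; exact hsum
  · funext ω
    have h2 := sum_shift d m (fun j => a j * f (n + d + j) ω)
    dsimp only at h2 ⊢
    rw [← h2]
    refine Finset.sum_congr rfl fun j _ => ?_
    by_cases hj : j < d
    · simp [hj]
    · simp only [hj, if_false]
      congr 2
      omega

omit [MeasurableSpace Ω] in
theorem conv_mono {f : ℕ → Ω → ℝ} {n N : ℕ} (h : N ≤ n) : conv f n ⊆ conv f N := by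
  intro g hg
  obtain ⟨d, rfl⟩ := Nat.exists_eq_add_of_le h
  exact conv_shift hg

omit [MeasurableSpace Ω] in
theorem conv_midpoint {f : ℕ → Ω → ℝ} {n : ℕ} {g h : Ω → ℝ}
    (hg : g ∈ conv f n) (hh : h ∈ conv f n) :
    (fun ω => (g ω + h ω) / 2) ∈ conv f n := by
  obtain ⟨m₁, a, ha, hsa, rfl⟩ := hg
  obtain ⟨m₂, b, hb, hsb, rfl⟩ := hh
  refine ⟨max m₁ m₂,
    fun j => ((if j < m₁ + 1 then a j else 0) + (if j < m₂ + 1 then b j else 0)) / 2,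
    fun j => ?_, ?_, ?_⟩
  · dsimp only
    have h1 : (0:ℝ) ≤ (if j < m₁ + 1 then a j else 0) := by split <;> [exact ha j; rfl]
    have h2 : (0:ℝ) ≤ (if j < m₂ + 1 then b j else 0) := by split <;> [exact hb j; rfl]
    positivity
  · dsimp only
    rw [← Finset.sum_div, Finset.sum_add_distrib,
      sum_pad m₁ (max m₁ m₂) (le_max_left _ _) a,
      sum_pad m₂ (max m₁ m₂) (le_max_right _ _) b, hsa, hsb]
    norm_num
  · funext ω
    dsimp only
    have e1 := sum_pad m₁ (max m₁ m₂) (le_max_left _ _) (fun j => a j * f (n+j) ω)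
    have e2 := sum_pad m₂ (max m₁ m₂) (le_max_right _ _) (fun j => b j * f (n+j) ω)
    rw [← e1, ← e2, ← Finset.sum_add_distrib, Finset.sum_div]
    refine Finset.sum_congr rfl fun j _ => ?_
    by_cases h1 : j < m₁ + 1 <;> by_cases h2 : j < m₂ + 1 <;> simp [h1, h2] <;> ring



theorem exp_mid (x y : ℝ) :
    (1 - Real.exp (-((x + y) / 2))) - ((1 - Real.exp (-x)) + (1 - Real.exp (-y))) / 2
      = (Real.exp (-x / 2) - Real.exp (-y / 2)) ^ 2 / 2 := by
  have hx : Real.exp (-x) = Real.exp (-x / 2) * Real.exp (-x / 2) := by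
    rw [← Real.exp_add]; ring_nf
  have hy : Real.exp (-y) = Real.exp (-y / 2) * Real.exp (-y / 2) := by
    rw [← Real.exp_add]; ring_nf
  have hxy : Real.exp (-((x + y) / 2)) = Real.exp (-x / 2) * Real.exp (-y / 2) := by
    rw [← Real.exp_add]; ring_nf
  rw [hx, hy, hxy]; ring

theorem exp_mid_ge_aux {x y M ε : ℝ} (hxy : x + ε ≤ y) (hx : x ≤ M) (hε : 0 < ε) :
    Real.exp (-M) * (1 - Real.exp (-(ε / 2))) ^ 2 / 2
      ≤ (Real.exp (-x / 2) - Real.exp (-y / 2)) ^ 2 / 2 := by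
  have h1 : Real.exp (-y / 2) ≤ Real.exp (-x / 2) * Real.exp (-(ε / 2)) := by
    rw [← Real.exp_add]
    exact Real.exp_le_exp.2 (by linarith)
  have h2 : Real.exp (-(ε / 2)) < 1 := Real.exp_lt_one_iff.2 (by linarith)
  have h3 : Real.exp (-M / 2) ≤ Real.exp (-x / 2) := Real.exp_le_exp.2 (by linarith)
  have h4 : Real.exp (-M / 2) * (1 - Real.exp (-(ε / 2)))
      ≤ Real.exp (-x / 2) - Real.exp (-y / 2) := by
    have : Real.exp (-x / 2) * (1 - Real.exp (-(ε / 2))) ≤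
        Real.exp (-x / 2) - Real.exp (-y / 2) := by nlinarith
    nlinarith [Real.exp_pos (-x / 2), Real.exp_pos (-M / 2)]
  have h5 : (0:ℝ) ≤ Real.exp (-M / 2) * (1 - Real.exp (-(ε / 2))) := by
    nlinarith [Real.exp_pos (-M / 2)]
  have h6 : Real.exp (-M) = Real.exp (-M / 2) * Real.exp (-M / 2) := by
    rw [← Real.exp_add]; ring_nf
  nlinarith [sq_nonneg (Real.exp (-x / 2) - Real.exp (-y / 2))]

theorem exp_mid_ge {x y M ε : ℝ} (hxy : ε ≤ |x - y|) (hx : x ≤ M) (hy : y ≤ M) (hε : 0 < ε) :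
    Real.exp (-M) * (1 - Real.exp (-(ε / 2))) ^ 2 / 2
      ≤ (Real.exp (-x / 2) - Real.exp (-y / 2)) ^ 2 / 2 := by
  rcases le_total x y with h | h
  · refine exp_mid_ge_aux ?_ hx hε
    rw [abs_sub_comm, abs_of_nonneg (by linarith)] at hxy; linarith
  · have := exp_mid_ge_aux (x := y) (y := x) ?_ hy hε
    · linarith [this, sq_abs (Real.exp (-x/2) - Real.exp (-y/2)),
        abs_sub_comm (Real.exp (-x/2)) (Real.exp (-y/2)),
        sq_abs (Real.exp (-y/2) - Real.exp (-x/2))]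
    · rw [abs_of_nonneg (by linarith)] at hxy; linarith

end Stmt9Aux

/-- Komlós-type lemma (Delbaen–Schachermayer, Lemma A1.1): if the convex hull of a
sequence of nonnegative random variables is bounded in probability, then there is a
sequence of forward convex combinations `gₙ ∈ conv(fₙ, f_{n+1}, …)` converging
almost surely to an (almost surely finite) random variable `g`. -/
theorem stmt_9 {Ω : Type*} [MeasurableSpace Ω] (P : Measure Ω) [IsProbabilityMeasure P]
    (f : ℕ → Ω → ℝ) (hmeas : ∀ n, Measurable (f n)) (hpos : ∀ n ω, 0 ≤ f n ω)
    (hbdd : ∀ ε > (0 : ℝ), ∃ M > (0 : ℝ), ∀ (m : ℕ) (a : ℕ → ℝ),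
      (∀ j, 0 ≤ a j) → (∑ j ∈ Finset.range (m + 1), a j) = 1 →
      P {ω | M ≤ ∑ j ∈ Finset.range (m + 1), a j * f j ω} < ENNReal.ofReal ε) :
    ∃ (m : ℕ → ℕ) (a : ℕ → ℕ → ℝ) (g : Ω → ℝ),
      (∀ n j, 0 ≤ a n j) ∧
      (∀ n, (∑ j ∈ Finset.range (m n + 1), a n j) = 1) ∧
      ∀ᵐ ω ∂P, Tendsto
        (fun n => ∑ j ∈ Finset.range (m n + 1), a n j * f (n + j) ω) atTop
        (nhds (g ω)) := by
  classical
  set u : ℝ → ℝ := fun x => 1 - Real.exp (-x) with hu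
  set I : (Ω → ℝ) → ℝ := fun g => ∫ ω, u (g ω) ∂P with hI
  -- integrability and bounds
  have humeas : ∀ {g : Ω → ℝ}, Measurable g → Measurable fun ω => u (g ω) := by
    intro g hg
    exact measurable_const.sub (hg.neg.exp)
  have hu01 : ∀ x : ℝ, 0 ≤ x → 0 ≤ u x ∧ u x ≤ 1 := by
    intro x hx
    have h1 := Real.exp_pos (-x)
    have h2 : Real.exp (-x) ≤ 1 := Real.exp_le_one_iff.2 (by linarith)
    constructor <;> simp only [hu] <;> linarith
  have hint : ∀ {g : Ω → ℝ}, Measurable g → (∀ ω, 0 ≤ g ω) →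
      Integrable (fun ω => u (g ω)) P := by
    intro g hg hg0
    refine (integrable_const (1:ℝ)).mono' (humeas hg).aestronglyMeasurable ?_
    filter_upwards with ω
    have := hu01 (g ω) (hg0 ω)
    rw [Real.norm_eq_abs, abs_le]
    exact ⟨by linarith [this.1], this.2⟩
  have hI01 : ∀ {n : ℕ} {g : Ω → ℝ}, g ∈ Stmt9Aux.conv f n → I g ∈ Icc (0:ℝ) 1 := by
    intro n g hg
    have hm := Stmt9Aux.conv_measurable hmeas hg
    have h0 := Stmt9Aux.conv_nonneg hpos hg
    constructor
    · exact integral_nonneg fun ω => (hu01 _ (h0 ω)).1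
    · calc I g ≤ ∫ _, (1:ℝ) ∂P :=
          integral_mono (hint hm h0) (integrable_const 1) fun ω => (hu01 _ (h0 ω)).2
        _ = 1 := by simp
  -- the suprema
  set α : ℕ → ℝ := fun n => sSup (I '' Stmt9Aux.conv f n) with hα
  have hbddA : ∀ n, BddAbove (I '' Stmt9Aux.conv f n) := by
    intro n
    exact ⟨1, fun x ⟨g, hg, hxe⟩ => hxe ▸ (hI01 hg).2⟩
  have hneA : ∀ n, (I '' Stmt9Aux.conv f n).Nonempty := fun n => (Stmt9Aux.conv_nonempty f n).image I
  have hα0 : ∀ n, 0 ≤ α n := by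
    intro n
    obtain ⟨g, hg⟩ := Stmt9Aux.conv_nonempty f n
    exact le_trans (hI01 hg).1 (le_csSup (hbddA n) ⟨g, hg, rfl⟩)
  have hαanti : Antitone α := by
    refine antitone_nat_of_succ_le fun n => ?_
    exact csSup_le_csSup (hbddA n) (hneA (n+1)) (Set.image_mono (Stmt9Aux.conv_mono (Nat.le_succ n)))
  set β : ℝ := ⨅ n, α n with hβ
  have hβle : ∀ n, β ≤ α n := fun n => ciInf_le ⟨0, fun x ⟨n, hxe⟩ => hxe ▸ hα0 n⟩ n
  -- choice of the gₙ
  have hchoice : ∀ n : ℕ, ∃ g ∈ Stmt9Aux.conv f n, α n - (1/2)^n < I g := by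
    intro n
    have h2 : α n - (1/2)^n < sSup (I '' Stmt9Aux.conv f n) := by
      have : (0:ℝ) < (1/2)^n := by positivity
      simp only [hα]; linarith
    obtain ⟨x, ⟨g, hg, rfl⟩, hlt⟩ := exists_lt_of_lt_csSup (hneA n) h2
    exact ⟨g, hg, hlt⟩
  choose g hgC hgI using hchoice
  have hgmeas : ∀ n, Measurable (g n) := fun n => Stmt9Aux.conv_measurable hmeas (hgC n)
  have hg0 : ∀ n ω, 0 ≤ g n ω := fun n => Stmt9Aux.conv_nonneg hpos (hgC n)
  -- the Cauchy-in-measure key estimate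
  have key : ∀ ε : ℝ, 0 < ε → ∃ N : ℕ, ∀ p q, N ≤ p → N ≤ q →
      P {ω | ε ≤ |g p ω - g q ω|} < ENNReal.ofReal ε := by
    intro ε hε
    obtain ⟨M, hM0, hMb⟩ := hbdd (ε/4) (by positivity)
    have hb' : ∀ (n : ℕ) (h : Ω → ℝ), h ∈ Stmt9Aux.conv f n →
        P {ω | M ≤ h ω} < ENNReal.ofReal (ε/4) := by
      intro n h hh
      obtain ⟨m, a, ha, hsum, rfl⟩ := Stmt9Aux.conv_mono (Nat.zero_le n) hh
      have := hMb m a ha hsum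
      simpa using this
    set δ : ℝ := Real.exp (-M) * (1 - Real.exp (-(ε / 2))) ^ 2 / 2 with hδdef
    have hδ : 0 < δ := by
      have h2 : Real.exp (-(ε/2)) < 1 := Real.exp_lt_one_iff.2 (by linarith)
      have := Real.exp_pos (-M)
      have h3 : 0 < 1 - Real.exp (-(ε/2)) := by linarith
      positivity
    obtain ⟨N₁, hN₁⟩ : ∃ N₁, α N₁ < β + δ * (ε/4) := by
      apply exists_lt_of_ciInf_lt
      rw [← hβ]; nlinarith
    obtain ⟨N₂, hN₂⟩ : ∃ N₂, ((1:ℝ)/2)^N₂ < δ * (ε/4) :=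
      exists_pow_lt_of_lt_one (by nlinarith) (by norm_num)
    refine ⟨max N₁ N₂, fun p q hp hq => ?_⟩
    have hpN : max N₁ N₂ ≤ p := hp
    have hgp : g p ∈ Stmt9Aux.conv f (max N₁ N₂) := Stmt9Aux.conv_mono hp (hgC p)
    have hgq : g q ∈ Stmt9Aux.conv f (max N₁ N₂) := Stmt9Aux.conv_mono hq (hgC q)
    have hmid : (fun ω => (g p ω + g q ω)/2) ∈ Stmt9Aux.conv f (max N₁ N₂) :=
      Stmt9Aux.conv_midpoint hgp hgq
    set bad : Set Ω := {ω | ε ≤ |g p ω - g q ω|} ∩ {ω | g p ω ≤ M} ∩ {ω | g q ω ≤ M}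
      with hbad
    have hbadmeas : MeasurableSet bad := by
      refine MeasurableSet.inter (MeasurableSet.inter ?_ ?_) ?_
      · exact measurableSet_le measurable_const ((hgmeas p).sub (hgmeas q)).abs
      · exact measurableSet_le (hgmeas p) measurable_const
      · exact measurableSet_le (hgmeas q) measurable_const
    -- pointwise bound
    have hpoint : ∀ ω, bad.indicator (fun _ => δ) ω
        ≤ u ((g p ω + g q ω)/2) - (u (g p ω) + u (g q ω))/2 := by
      intro ω
      have hrw : u ((g p ω + g q ω)/2) - (u (g p ω) + u (g q ω))/2
          = (Real.exp (-(g p ω) / 2) - Real.exp (-(g q ω) / 2)) ^ 2 / 2 :=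
        Stmt9Aux.exp_mid _ _
      by_cases hω : ω ∈ bad
      · rw [Set.indicator_of_mem hω, hrw]
        obtain ⟨⟨h1, h2⟩, h3⟩ := hω
        exact Stmt9Aux.exp_mid_ge h1 h2 h3 hε
      · rw [Set.indicator_of_notMem hω, hrw]
        positivity
    -- integrate
    have hintp := hint (hgmeas p) (hg0 p)
    have hintq := hint (hgmeas q) (hg0 q)
    have hintm := hint (Stmt9Aux.conv_measurable hmeas hmid) (Stmt9Aux.conv_nonneg hpos hmid)
    have hIndint : Integrable (bad.indicator fun _ => δ) P :=
      (integrable_const δ).indicator hbadmeas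
    have hstep : δ * (P bad).toReal ≤
        I (fun ω => (g p ω + g q ω)/2) - (I (g p) + I (g q))/2 := by
      have h1 : ∫ ω, bad.indicator (fun _ => δ) ω ∂P = (P bad).toReal * δ := by
        rw [integral_indicator_const _ hbadmeas]; simp [smul_eq_mul, measureReal_def]
      have hsum2 : Integrable (fun ω => (u (g p ω) + u (g q ω))/2) P :=
        (hintp.add hintq).div_const 2
      have h2 : ∫ ω, (u ((g p ω + g q ω)/2) - (u (g p ω) + u (g q ω))/2) ∂P
          = I (fun ω => (g p ω + g q ω)/2) - (I (g p) + I (g q))/2 := by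
        rw [integral_sub hintm hsum2, integral_div, integral_add hintp hintq]
      calc δ * (P bad).toReal = ∫ ω, bad.indicator (fun _ => δ) ω ∂P := by
            rw [h1]; ring
        _ ≤ ∫ ω, (u ((g p ω + g q ω)/2) - (u (g p ω) + u (g q ω))/2) ∂P :=
            integral_mono hIndint (hintm.sub ((hintp.add hintq).div_const 2)) hpoint
        _ = _ := h2
    -- upper bound on the RHS
    have hmidle : I (fun ω => (g p ω + g q ω)/2) ≤ α (max N₁ N₂) :=
      le_csSup (hbddA _) ⟨_, hmid, rfl⟩
    have hplow : α p - (1/2)^p < I (g p) := hgI p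
    have hqlow : α q - (1/2)^q < I (g q) := hgI q
    have hpow : ((1:ℝ)/2)^p ≤ (1/2)^N₂ := by
      apply pow_le_pow_of_le_one (by norm_num) (by norm_num)
      exact le_trans (le_max_right _ _) hp
    have hpow' : ((1:ℝ)/2)^q ≤ (1/2)^N₂ := by
      apply pow_le_pow_of_le_one (by norm_num) (by norm_num)
      exact le_trans (le_max_right _ _) hq
    have hαm : α (max N₁ N₂) ≤ α N₁ := hαanti (le_max_left _ _)
    have hfinal : δ * (P bad).toReal < δ * (ε/2) := by
      have h1 : β - (1/2)^N₂ ≤ I (g p) := by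
        have := hβle p; linarith
      have h2 : β - (1/2)^N₂ ≤ I (g q) := by
        have := hβle q; linarith
      have h3 : δ * (P bad).toReal ≤ α N₁ - (β - (1/2)^N₂) := by
        have := hstep
        have h4 : I (fun ω => (g p ω + g q ω)/2) - (I (g p) + I (g q))/2
            ≤ α N₁ - (β - (1/2)^N₂) := by linarith
        linarith
      linarith
    have hPbad : (P bad).toReal < ε/2 := by
      have := hfinal
      nlinarith [ENNReal.toReal_nonneg (a := P bad)]
    have hPbad' : P bad < ENNReal.ofReal (ε/2) := by
      exact (ENNReal.lt_ofReal_iff_toReal_lt (measure_ne_top P bad)).2 hPbad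
    -- combine
    have hsub : {ω | ε ≤ |g p ω - g q ω|} ⊆ bad ∪ {ω | M ≤ g p ω} ∪ {ω | M ≤ g q ω} := by
      intro ω hω
      by_cases h1 : g p ω ≤ M
      · by_cases h2 : g q ω ≤ M
        · exact Or.inl (Or.inl ⟨⟨hω, h1⟩, h2⟩)
        · exact Or.inr (le_of_not_ge h2)
      · exact Or.inl (Or.inr (le_of_not_ge h1))
    calc P {ω | ε ≤ |g p ω - g q ω|} ≤ P (bad ∪ {ω | M ≤ g p ω} ∪ {ω | M ≤ g q ω}) :=
          measure_mono hsub
      _ ≤ P (bad ∪ {ω | M ≤ g p ω}) + P {ω | M ≤ g q ω} := measure_union_le _ _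
      _ ≤ P bad + P {ω | M ≤ g p ω} + P {ω | M ≤ g q ω} := by
          gcongr; exact measure_union_le _ _
      _ < ENNReal.ofReal (ε/2) + ENNReal.ofReal (ε/4) + ENNReal.ofReal (ε/4) :=
          ENNReal.add_lt_add (ENNReal.add_lt_add hPbad' (hb' _ _ hgp)) (hb' _ _ hgq)
      _ = ENNReal.ofReal ε := by
          rw [← ENNReal.ofReal_add (by linarith) (by linarith),
            ← ENNReal.ofReal_add (by linarith) (by linarith)]
          congr 1
          ring
  -- extraction of an a.s. convergent subsequence
  have keyk : ∀ k : ℕ, ∃ N, ∀ p q, N ≤ p → N ≤ q →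
      P {ω | (1/2)^k ≤ |g p ω - g q ω|} < ENNReal.ofReal ((1/2)^k) :=
    fun k => key _ (by positivity)
  choose Nf hNf using keyk
  let n : ℕ → ℕ := fun k => Nat.rec (Nf 0) (fun k ih => max (ih + 1) (Nf (k+1))) k
  have hn_succ : ∀ k, n (k+1) = max (n k + 1) (Nf (k+1)) := fun k => rfl
  have hnmono : ∀ k, n k < n (k+1) := by
    intro k; rw [hn_succ]; exact lt_of_lt_of_le (Nat.lt_succ_self _) (le_max_left _ _)
  have hnNf : ∀ k, Nf k ≤ n k := by
    intro k; cases k with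
    | zero => exact le_refl _
    | succ k => rw [hn_succ]; exact le_max_right _ _
  have hnk : ∀ k, k ≤ n k := by
    intro k; induction k with
    | zero => exact Nat.zero_le _
    | succ k ih => have := hnmono k; omega
  set E : ℕ → Set Ω := fun k => {ω | (1/2)^k ≤ |g (n (k+1)) ω - g (n k) ω|} with hE
  have hPE : ∀ k, P (E k) < ENNReal.ofReal ((1/2)^k) := by
    intro k
    exact hNf k _ _ (le_trans (hnNf k) (le_of_lt (hnmono k))) (hnNf k)
  have htsum : ∑' k, P (E k) ≠ ⊤ := by
    refine ne_top_of_le_ne_top ?_ (ENNReal.tsum_le_tsum fun k => (hPE k).le)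
    rw [← ENNReal.ofReal_tsum_of_nonneg (fun k => by positivity) summable_geometric_two]
    exact ENNReal.ofReal_ne_top
  have hae := MeasureTheory.ae_finite_setOf_mem (μ := P) htsum
  set L : Ω → ℝ := fun ω =>
    if h : ∃ l : ℝ, Tendsto (fun k => g (n k) ω) atTop (nhds l) then h.choose else 0 with hL
  have haeT : ∀ᵐ ω ∂P, Tendsto (fun k => g (n k) ω) atTop (nhds (L ω)) := by
    filter_upwards [hae] with ω hω
    have hev : ∀ᶠ k in atTop, ω ∉ E k := by
      have h2 := Set.Finite.eventually_cofinite_notMem hω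
      rwa [Nat.cofinite_eq_atTop] at h2
    obtain ⟨K, hK⟩ := eventually_atTop.1 hev
    have hdist : ∀ i : ℕ, dist (g (n (i + K)) ω) (g (n (i + 1 + K)) ω)
        ≤ ((1:ℝ)/2)^K * (1/2)^i := by
      intro i
      have h3 : ω ∉ E (i + K) := hK _ (Nat.le_add_left K i)
      have h4 : ¬ ((1:ℝ)/2)^(i+K) ≤ |g (n (i+K+1)) ω - g (n (i+K)) ω| := h3
      push_neg at h4
      rw [show i + 1 + K = i + K + 1 from by omega, Real.dist_eq, abs_sub_comm]
      have h5 : ((1:ℝ)/2)^(i+K) = (1/2)^K * (1/2)^i := by rw [pow_add]; ring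
      linarith
    have hc : CauchySeq (fun i => g (n (i + K)) ω) :=
      cauchySeq_of_le_geometric (1/2) ((1/2)^K) (by norm_num) hdist
    obtain ⟨l, hl⟩ := cauchySeq_tendsto_of_complete hc
    have hex : ∃ l : ℝ, Tendsto (fun k => g (n k) ω) atTop (nhds l) :=
      ⟨l, (tendsto_add_atTop_iff_nat K).1 hl⟩
    have hLω : L ω = hex.choose := dif_pos hex
    rw [hLω]
    exact hex.choose_spec
  -- representation of the subsequence as forward convex combinations
  have hrep : ∀ k : ℕ, ∃ m : ℕ, ∃ a : ℕ → ℝ, (∀ j, 0 ≤ a j) ∧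
      (∑ j ∈ Finset.range (m+1), a j) = 1 ∧
      g (n k) = fun ω => ∑ j ∈ Finset.range (m+1), a j * f (k+j) ω :=
    fun k => Stmt9Aux.conv_mono (hnk k) (hgC (n k))
  choose m a hA hS hR using hrep
  refine ⟨m, a, L, hA, hS, ?_⟩
  filter_upwards [haeT] with ω hω
  have heq : (fun k => ∑ j ∈ Finset.range (m k + 1), a k j * f (k + j) ω)
      = fun k => g (n k) ω := by
    funext k
    exact (congrFun (hR k) ω).symm
  rw [heq]
  exact hω
end
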